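/- Let 0 < b < a and let v : closure(B_a \ B_b) → ℝ be continuous, harmonic in the annulus B_a \ B_b = {x ∈ ℝ² : b < |x| < a}, with v ≡ c_a on the circle |x| = a and v ≡ c_b on the circle |x| = b, where c_a, c_b are constants. Then v(x) = ((c_a − c_b)/log(a/b))·log|x| + (c_b·log a − c_a·log b)/log(a/b) for all x in the annulus. -/

import Mathlib

open Filter Topology

section Stmt5Aux

local notation "E2" => EuclideanSpace ℝ (Fin 2)

/-- 1-D second derivative test: at a local max, the second derivative is nonpositive. -/
private lemma stmt5_second_deriv_nonpos {g : ℝ → ℝ} (hmax : IsLocalMax g 0)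
    (hg : ∀ᶠ t in 𝓝 (0:ℝ), DifferentiableAt ℝ g t)
    (hg' : DifferentiableAt ℝ (deriv g) 0) :
    deriv (deriv g) 0 ≤ 0 := by
  by_contra hlt
  push_neg at hlt
  have h0 : deriv g 0 = 0 := hmax.deriv_eq_zero
  have hs := hg'.hasDerivAt
  rw [hasDerivAt_iff_tendsto_slope] at hs
  have hpos : ∀ᶠ t in 𝓝[>] (0:ℝ), 0 < deriv g t := by
    have h1 : ∀ᶠ t in 𝓝[≠] (0:ℝ), 0 < slope (deriv g) 0 t :=
      hs (eventually_gt_nhds hlt)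
    have h2 : ∀ᶠ t in 𝓝[>] (0:ℝ), 0 < slope (deriv g) 0 t :=
      h1.filter_mono (nhdsWithin_mono _ (fun t ht => ne_of_gt ht))
    filter_upwards [h2, self_mem_nhdsWithin] with t ht ht0
    have hsl : slope (deriv g) 0 t = deriv g t / t := by
      simp [slope_def_field, h0]
    rw [hsl] at ht
    have := mul_pos ht ht0
    rwa [div_mul_cancel₀] at this
    exact ne_of_gt ht0
  rw [eventually_nhdsWithin_iff] at hpos
  obtain ⟨δ1, hδ1, hδ1p⟩ := Metric.eventually_nhds_iff.mp hpos
  obtain ⟨δ2, hδ2, hδ2p⟩ := Metric.eventually_nhds_iff.mp (hg.and hmax)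
  set δ := min δ1 δ2 / 2 with hδdef
  have hδpos : 0 < δ := by positivity
  have hδlt1 : δ < δ1 := by
    have := min_le_left δ1 δ2; linarith [lt_min hδ1 hδ2]
  have hδlt2 : δ < δ2 := by
    have := min_le_right δ1 δ2; linarith [lt_min hδ1 hδ2]
  have hmono : StrictMonoOn g (Set.Icc 0 δ) := by
    apply strictMonoOn_of_deriv_pos (convex_Icc _ _)
    · apply ContinuousOn.mono (s := Set.Ioo (-δ2) δ2)
      · exact fun y hy => ((hδ2p (by rw [Real.dist_eq, sub_zero]; exact abs_lt.2 ⟨hy.1, hy.2⟩)).1.continuousAt.continuousWithinAt)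
      · intro y hy; exact ⟨by linarith [hy.1], by linarith [hy.2]⟩
    · intro y hy
      rw [interior_Icc] at hy
      refine hδ1p (y := y) ?_ hy.1
      rw [Real.dist_eq, sub_zero, abs_of_pos hy.1]
      exact lt_trans hy.2 hδlt1
  have h1 : g 0 < g δ := hmono ⟨le_refl 0, le_of_lt hδpos⟩ ⟨le_of_lt hδpos, le_refl δ⟩ hδpos
  have h2 : g δ ≤ g 0 := (hδ2p (by rw [Real.dist_eq, sub_zero, abs_of_pos hδpos]; exact hδlt2)).2
  linarith

private lemma stmt5_dir_second_nonpos {E : Type*} [NormedAddCommGroup E] [NormedSpace ℝ E]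
    {f : E → ℝ} {U : Set E} (hU : IsOpen U) {x₀ : E} (hx₀ : x₀ ∈ U)
    (hf : ContDiffOn ℝ 2 f U) (hmax : IsLocalMax f x₀) (e : E) :
    fderiv ℝ (fun y => fderiv ℝ f y e) x₀ e ≤ 0 := by
  set ℓ : ℝ → E := fun t => x₀ + t • e with hℓ
  have hℓ0 : ℓ 0 = x₀ := by simp [hℓ]
  have hℓc : Continuous ℓ := by continuity
  have hℓd : ∀ t, HasDerivAt ℓ e t := by
    intro t
    have h1 : HasDerivAt (fun t : ℝ => t • e) ((1:ℝ) • e) t :=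
      (hasDerivAt_id t).smul_const e
    simpa [hℓ] using h1.const_add x₀
  have hV : IsOpen (ℓ ⁻¹' U) := hU.preimage hℓc
  have h0V : (0:ℝ) ∈ ℓ ⁻¹' U := by simp [hℓ0, hx₀]
  have hfd : ∀ y ∈ U, DifferentiableAt ℝ f y := fun y hy =>
    ((hf.differentiableOn (by norm_num)).differentiableAt (hU.mem_nhds hy))
  set g : ℝ → ℝ := f ∘ ℓ with hg
  have hgmax : IsLocalMax g 0 := by
    have : Tendsto ℓ (𝓝 0) (𝓝 x₀) := by rw [← hℓ0]; exact hℓc.continuousAt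
    exact IsMaxFilter.comp_tendsto (hℓ0 ▸ hmax) this
  have hgd : ∀ t ∈ ℓ ⁻¹' U, HasDerivAt g (fderiv ℝ f (ℓ t) e) t := fun t ht =>
    (hfd _ ht).hasFDerivAt.comp_hasDerivAt t (hℓd t)
  set F : E → ℝ := fun y => fderiv ℝ f y e with hF
  have hFd : DifferentiableAt ℝ F x₀ := by
    have h1 : ContDiffOn ℝ 1 (fun y => fderivWithin ℝ f U y) U :=
      hf.fderivWithin hU.uniqueDiffOn (by norm_num)
    have h2 : DifferentiableAt ℝ (fun y => fderivWithin ℝ f U y) x₀ :=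
      (h1.differentiableOn one_ne_zero).differentiableAt (hU.mem_nhds hx₀)
    have heq : (fun y => fderiv ℝ f y) =ᶠ[𝓝 x₀] (fun y => fderivWithin ℝ f U y) :=
      eventually_of_mem (hU.mem_nhds hx₀) (fun y hy => (fderivWithin_of_isOpen hU hy).symm)
    have h3 : DifferentiableAt ℝ (fun y => fderiv ℝ f y) x₀ :=
      h2.congr_of_eventuallyEq heq
    exact ((ContinuousLinearMap.apply ℝ ℝ e).differentiableAt).comp x₀ h3
  have hgF : HasDerivAt (F ∘ ℓ) (fderiv ℝ F x₀ e) 0 := by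
    have h := (hℓ0.symm ▸ hFd.hasFDerivAt :
      HasFDerivAt F (fderiv ℝ F x₀) (ℓ 0)).comp_hasDerivAt 0 (hℓd 0)
    exact h
  have hderiv_eq : deriv g =ᶠ[𝓝 (0:ℝ)] F ∘ ℓ :=
    eventually_of_mem (hV.mem_nhds h0V) (fun t ht => (hgd t ht).deriv)
  have hg'd : DifferentiableAt ℝ (deriv g) 0 :=
    hgF.differentiableAt.congr_of_eventuallyEq hderiv_eq
  have hkey : deriv (deriv g) 0 ≤ 0 := by
    apply stmt5_second_deriv_nonpos hgmax _ hg'd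
    exact eventually_of_mem (hV.mem_nhds h0V) (fun t ht => (hgd t ht).differentiableAt)
  have : deriv (deriv g) 0 = fderiv ℝ F x₀ e := by
    rw [hderiv_eq.deriv_eq, hgF.deriv]
  rwa [this] at hkey

private lemma stmt5_annulus_max_principle {a b : ℝ} (hb : 0 < b) (hba : b < a)
    {f : E2 → ℝ}
    (hc : ContinuousOn f (Metric.closedBall 0 a \ Metric.ball 0 b))
    (hreg : ContDiffOn ℝ 2 f {x : E2 | b < ‖x‖ ∧ ‖x‖ < a})
    (hpos : ∀ x : E2, b < ‖x‖ → ‖x‖ < a →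
      0 < fderiv ℝ (fun y => fderiv ℝ f y (EuclideanSpace.single 0 1)) x
            (EuclideanSpace.single 0 1)
          + fderiv ℝ (fun y => fderiv ℝ f y (EuclideanSpace.single 1 1)) x
            (EuclideanSpace.single 1 1))
    (hbd : ∀ x : E2, ‖x‖ = a ∨ ‖x‖ = b → f x ≤ 0) :
    ∀ x : E2, b ≤ ‖x‖ → ‖x‖ ≤ a → f x ≤ 0 := by
  intro x hxb hxa
  set K : Set E2 := Metric.closedBall 0 a \ Metric.ball 0 b with hK
  have hmemK : ∀ z : E2, z ∈ K ↔ b ≤ ‖z‖ ∧ ‖z‖ ≤ a := by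
    intro z
    simp [hK, Metric.mem_closedBall, Metric.mem_ball, dist_zero_right, not_lt, and_comm]
  have hxK : x ∈ K := (hmemK x).2 ⟨hxb, hxa⟩
  have hKcomp : IsCompact K := (isCompact_closedBall 0 a).diff Metric.isOpen_ball
  obtain ⟨x₀, hx₀K, hx₀max⟩ := hKcomp.exists_isMaxOn ⟨x, hxK⟩ hc
  obtain ⟨hx₀b, hx₀a⟩ := (hmemK x₀).1 hx₀K
  rcases eq_or_lt_of_le hx₀b with hb' | hb'
  · exact le_trans (hx₀max hxK) (hbd x₀ (Or.inr hb'.symm))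
  rcases eq_or_lt_of_le hx₀a with ha' | ha'
  · exact le_trans (hx₀max hxK) (hbd x₀ (Or.inl ha'))
  exfalso
  have hUopen : IsOpen {x : E2 | b < ‖x‖ ∧ ‖x‖ < a} := by
    have : {x : E2 | b < ‖x‖ ∧ ‖x‖ < a} = (fun x : E2 => ‖x‖) ⁻¹' Set.Ioo b a := rfl
    rw [this]; exact isOpen_Ioo.preimage continuous_norm
  have hx₀U : x₀ ∈ {x : E2 | b < ‖x‖ ∧ ‖x‖ < a} := ⟨hb', ha'⟩
  have hUK : {x : E2 | b < ‖x‖ ∧ ‖x‖ < a} ⊆ K := fun z hz =>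
    (hmemK z).2 ⟨le_of_lt hz.1, le_of_lt hz.2⟩
  have hloc : IsLocalMax f x₀ :=
    hx₀max.isLocalMax (mem_of_superset (hUopen.mem_nhds hx₀U) hUK)
  have h0 := stmt5_dir_second_nonpos hUopen hx₀U hreg hloc (EuclideanSpace.single 0 1)
  have h1 := stmt5_dir_second_nonpos hUopen hx₀U hreg hloc (EuclideanSpace.single 1 1)
  linarith [hpos x₀ hb' ha']

noncomputable def stmt5qq : E2 → ℝ := fun y => y 0 ^ 2 + y 1 ^ 2

private lemma stmt5qq_eq_norm_sq (y : E2) : stmt5qq y = ‖y‖ ^ 2 := by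
  rw [EuclideanSpace.norm_eq]
  rw [Real.sq_sqrt (by positivity)]
  simp [stmt5qq, Fin.sum_univ_two]

noncomputable def stmt5Dq (y : E2) : E2 →L[ℝ] ℝ :=
  (2 * y 0) • (EuclideanSpace.proj (0:Fin 2) : E2 →L[ℝ] ℝ)
    + (2 * y 1) • (EuclideanSpace.proj (1:Fin 2) : E2 →L[ℝ] ℝ)

private lemma stmt5_hasFDerivAt_qq (y : E2) : HasFDerivAt stmt5qq (stmt5Dq y) y := by
  have h0 : HasFDerivAt (fun z : E2 => z 0) (EuclideanSpace.proj (0:Fin 2) : E2 →L[ℝ] ℝ) y :=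
    (EuclideanSpace.proj (0:Fin 2) : E2 →L[ℝ] ℝ).hasFDerivAt
  have h1 : HasFDerivAt (fun z : E2 => z 1) (EuclideanSpace.proj (1:Fin 2) : E2 →L[ℝ] ℝ) y :=
    (EuclideanSpace.proj (1:Fin 2) : E2 →L[ℝ] ℝ).hasFDerivAt
  have h0' := (h0.mul h0)
  have h1' := (h1.mul h1)
  have := h0'.add h1'
  convert this.congr_fderiv (g' := stmt5Dq y) ?_ using 1
  · ext z; simp [stmt5qq]; ring
  · simp only [stmt5Dq]; ext z; simp only [ContinuousLinearMap.add_apply, ContinuousLinearMap.smul_apply, smul_eq_mul]; ring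

private lemma stmt5Dq_apply (y : E2) (i : Fin 2) :
    stmt5Dq y (EuclideanSpace.single i 1) = 2 * y i := by
  fin_cases i <;>
    simp [stmt5Dq, EuclideanSpace.single_apply]

noncomputable def stmt5pp (c1 c2 c3 : ℝ) : E2 → ℝ :=
  fun y => c1 * Real.log (stmt5qq y) + c2 * stmt5qq y + c3

private lemma stmt5_contDiff_qq : ContDiff ℝ 2 stmt5qq := by
  have h0 : ContDiff ℝ 2 (fun y : E2 => y 0) :=
    (EuclideanSpace.proj (0:Fin 2) : E2 →L[ℝ] ℝ).contDiff
  have h1 : ContDiff ℝ 2 (fun y : E2 => y 1) :=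
    (EuclideanSpace.proj (1:Fin 2) : E2 →L[ℝ] ℝ).contDiff
  exact (h0.pow 2).add (h1.pow 2)

private lemma stmt5_contDiffAt_pp {c1 c2 c3 : ℝ} {y : E2} (hy : stmt5qq y ≠ 0) :
    ContDiffAt ℝ 2 (stmt5pp c1 c2 c3) y := by
  unfold stmt5pp
  have hlog : ContDiffAt ℝ 2 (fun z => Real.log (stmt5qq z)) y :=
    (Real.contDiffAt_log.2 hy).comp y stmt5_contDiff_qq.contDiffAt
  exact ((hlog.const_smul c1).add (stmt5_contDiff_qq.contDiffAt.const_smul c2)).add contDiffAt_const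

private lemma stmt5_hasFDerivAt_pp {c1 c2 c3 : ℝ} {y : E2} (hy : stmt5qq y ≠ 0) :
    HasFDerivAt (stmt5pp c1 c2 c3) ((c1 * (stmt5qq y)⁻¹ + c2) • stmt5Dq y) y := by
  have hq := stmt5_hasFDerivAt_qq y
  have hlog : HasFDerivAt (fun z => Real.log (stmt5qq z)) ((stmt5qq y)⁻¹ • stmt5Dq y) y :=
    (Real.hasDerivAt_log hy).comp_hasFDerivAt y hq
  have := ((hlog.const_mul c1).add (hq.const_mul c2)).add_const c3
  refine this.congr_fderiv ?_
  ext z; simp only [ContinuousLinearMap.add_apply, ContinuousLinearMap.smul_apply, smul_eq_mul]; ring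

private lemma stmt5_fderiv_pp_apply {c1 c2 c3 : ℝ} {y : E2} (hy : stmt5qq y ≠ 0) (i : Fin 2) :
    fderiv ℝ (stmt5pp c1 c2 c3) y (EuclideanSpace.single i 1)
      = (c1 * (stmt5qq y)⁻¹ + c2) * (2 * y i) := by
  rw [(stmt5_hasFDerivAt_pp hy).fderiv]
  simp [stmt5Dq_apply]

private lemma stmt5_isOpen_qq_ne : IsOpen {y : E2 | stmt5qq y ≠ 0} :=
  isOpen_compl_singleton.preimage stmt5_contDiff_qq.continuous

private lemma stmt5_hasFDerivAt_P {c1 c2 : ℝ} {x : E2} (hx : stmt5qq x ≠ 0) (i : Fin 2) :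
    HasFDerivAt (fun y : E2 => (c1 * (stmt5qq y)⁻¹ + c2) * (2 * y i))
      ((c1 * (stmt5qq x)⁻¹ + c2) • ((2:ℝ) • (EuclideanSpace.proj i : E2 →L[ℝ] ℝ))
        + (2 * x i) • ((c1 * (-(stmt5qq x ^ 2)⁻¹)) • stmt5Dq x)) x := by
  have hq := stmt5_hasFDerivAt_qq x
  have hinv : HasFDerivAt (fun y => (stmt5qq y)⁻¹) ((-(stmt5qq x ^ 2)⁻¹) • stmt5Dq x) x :=
    (hasDerivAt_inv hx).comp_hasFDerivAt x hq
  have hc : HasFDerivAt (fun y => c1 * (stmt5qq y)⁻¹ + c2)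
      (c1 • ((-(stmt5qq x ^ 2)⁻¹) • stmt5Dq x)) x := (hinv.const_mul c1).add_const c2
  have hd : HasFDerivAt (fun y : E2 => 2 * y i)
      ((2:ℝ) • (EuclideanSpace.proj i : E2 →L[ℝ] ℝ)) x :=
    (EuclideanSpace.proj i : E2 →L[ℝ] ℝ).hasFDerivAt.const_mul 2
  have := hc.mul hd
  refine this.congr_fderiv ?_
  ext z; simp only [ContinuousLinearMap.add_apply, ContinuousLinearMap.smul_apply, smul_eq_mul]; ring

private lemma stmt5_lap_pp {c1 c2 c3 : ℝ} {x : E2} (hx : stmt5qq x ≠ 0) :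
    fderiv ℝ (fun y => fderiv ℝ (stmt5pp c1 c2 c3) y (EuclideanSpace.single 0 1)) x
        (EuclideanSpace.single 0 1)
      + fderiv ℝ (fun y => fderiv ℝ (stmt5pp c1 c2 c3) y (EuclideanSpace.single 1 1)) x
        (EuclideanSpace.single 1 1) = 4 * c2 := by
  have hmem : {y : E2 | stmt5qq y ≠ 0} ∈ 𝓝 x := stmt5_isOpen_qq_ne.mem_nhds hx
  have hfd : ∀ i : Fin 2,
      fderiv ℝ (fun y => fderiv ℝ (stmt5pp c1 c2 c3) y (EuclideanSpace.single i 1)) x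
        (EuclideanSpace.single i 1)
      = (c1 * (stmt5qq x)⁻¹ + c2) * 2
        + (2 * x i) * ((c1 * (-(stmt5qq x ^ 2)⁻¹)) * (2 * x i)) := by
    intro i
    have heq : (fun y => fderiv ℝ (stmt5pp c1 c2 c3) y (EuclideanSpace.single i 1))
        =ᶠ[𝓝 x] (fun y => (c1 * (stmt5qq y)⁻¹ + c2) * (2 * y i)) :=
      eventually_of_mem hmem (fun y hy => stmt5_fderiv_pp_apply hy i)
    rw [heq.fderiv_eq, (stmt5_hasFDerivAt_P hx i).fderiv]
    simp [stmt5Dq_apply, EuclideanSpace.single_apply]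
  rw [hfd 0, hfd 1]
  have h : x 0 ^ 2 + x 1 ^ 2 = stmt5qq x := rfl
  field_simp
  linear_combination (-4 * c1) * h

private lemma stmt5_diffAt_fderiv_apply {E : Type*} [NormedAddCommGroup E] [NormedSpace ℝ E]
    {f : E → ℝ} {U : Set E} (hU : IsOpen U) {x : E} (hx : x ∈ U)
    (hf : ContDiffOn ℝ 2 f U) (e : E) :
    DifferentiableAt ℝ (fun y => fderiv ℝ f y e) x := by
  have h1 : ContDiffOn ℝ 1 (fun y => fderivWithin ℝ f U y) U :=
    hf.fderivWithin hU.uniqueDiffOn (by norm_num)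
  have h2 : DifferentiableAt ℝ (fun y => fderivWithin ℝ f U y) x :=
    (h1.differentiableOn one_ne_zero).differentiableAt (hU.mem_nhds hx)
  have heq : (fun y => fderiv ℝ f y) =ᶠ[𝓝 x] (fun y => fderivWithin ℝ f U y) :=
    eventually_of_mem (hU.mem_nhds hx) (fun y hy => (fderivWithin_of_isOpen hU hy).symm)
  have h3 : DifferentiableAt ℝ (fun y => fderiv ℝ f y) x :=
    h2.congr_of_eventuallyEq heq
  exact ((ContinuousLinearMap.apply ℝ ℝ e).differentiableAt).comp x h3

private lemma stmt5_fderiv2_add {E : Type*} [NormedAddCommGroup E] [NormedSpace ℝ E]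
    {u p : E → ℝ} {U : Set E} (hU : IsOpen U) {x : E} (hx : x ∈ U)
    (hu : ContDiffOn ℝ 2 u U) (hp : ContDiffOn ℝ 2 p U) (e : E) :
    fderiv ℝ (fun y => fderiv ℝ (fun z => u z + p z) y e) x e
      = fderiv ℝ (fun y => fderiv ℝ u y e) x e
        + fderiv ℝ (fun y => fderiv ℝ p y e) x e := by
  have hud : ∀ y ∈ U, DifferentiableAt ℝ u y := fun y hy =>
    (hu.differentiableOn (by norm_num)).differentiableAt (hU.mem_nhds hy)
  have hpd : ∀ y ∈ U, DifferentiableAt ℝ p y := fun y hy =>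
    (hp.differentiableOn (by norm_num)).differentiableAt (hU.mem_nhds hy)
  have heq : (fun y => fderiv ℝ (fun z => u z + p z) y e)
      =ᶠ[𝓝 x] (fun y => fderiv ℝ u y e + fderiv ℝ p y e) := by
    refine eventually_of_mem (hU.mem_nhds hx) (fun y hy => ?_)
    show fderiv ℝ (fun z => u z + p z) y e = _
    rw [fderiv_fun_add (hud y hy) (hpd y hy)]
    simp
  rw [heq.fderiv_eq, fderiv_fun_add (stmt5_diffAt_fderiv_apply hU hx hu e)
    (stmt5_diffAt_fderiv_apply hU hx hp e)]
  simp

private lemma stmt5_fderiv2_neg {E : Type*} [NormedAddCommGroup E] [NormedSpace ℝ E]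
    {u : E → ℝ} {x e : E} :
    fderiv ℝ (fun y => fderiv ℝ (fun z => -u z) y e) x e
      = -(fderiv ℝ (fun y => fderiv ℝ u y e) x e) := by
  have h1 : (fun y => fderiv ℝ (fun z => -u z) y e) = fun y => -(fderiv ℝ u y e) := by
    funext y; rw [fderiv_fun_neg]; simp
  rw [h1, fderiv_fun_neg]
  simp

/-- Upper bound half of the uniqueness statement. -/
private lemma stmt5_key (a b ca cb A B : ℝ) (hb : 0 < b) (hba : b < a)
    (v : E2 → ℝ)
    (hvc : ContinuousOn v (Metric.closedBall 0 a \ Metric.ball 0 b))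
    (hvreg : ContDiffOn ℝ 2 v {x : E2 | b < ‖x‖ ∧ ‖x‖ < a})
    (hharm : ∀ x : E2, b < ‖x‖ → ‖x‖ < a →
      fderiv ℝ (fun y => fderiv ℝ v y (EuclideanSpace.single 0 1)) x (EuclideanSpace.single 0 1)
        + fderiv ℝ (fun y => fderiv ℝ v y (EuclideanSpace.single 1 1)) x
            (EuclideanSpace.single 1 1) = 0)
    (hbda : ∀ x : E2, ‖x‖ = a → v x = ca)
    (hbdb : ∀ x : E2, ‖x‖ = b → v x = cb)
    (hA : A * Real.log a + B = ca) (hB : A * Real.log b + B = cb) :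
    ∀ x : E2, b < ‖x‖ → ‖x‖ < a → v x ≤ A * Real.log ‖x‖ + B := by
  intro x hxb hxa
  have ha : 0 < a := lt_trans hb hba
  have hqK : ∀ y : E2, b ≤ ‖y‖ → stmt5qq y ≠ 0 := by
    intro y hy
    rw [stmt5qq_eq_norm_sq]
    have h0 : 0 < ‖y‖ := lt_of_lt_of_le hb hy
    positivity
  have hU : ∀ y : E2, y ∈ {x : E2 | b < ‖x‖ ∧ ‖x‖ < a} → stmt5qq y ≠ 0 :=
    fun y hy => hqK y (le_of_lt hy.1)
  have hUopen : IsOpen {x : E2 | b < ‖x‖ ∧ ‖x‖ < a} := by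
    have : {x : E2 | b < ‖x‖ ∧ ‖x‖ < a} = (fun x : E2 => ‖x‖) ⁻¹' Set.Ioo b a := rfl
    rw [this]; exact isOpen_Ioo.preimage continuous_norm
  have key : ∀ ε : ℝ, 0 < ε → v x - (A * Real.log ‖x‖ + B) ≤ ε * a ^ 2 := by
    intro ε hε
    set c1 : ℝ := -A / 2 with hc1
    set c2 : ℝ := ε with hc2
    set c3 : ℝ := -B - ε * a ^ 2 with hc3
    set f : E2 → ℝ := fun y => v y + stmt5pp c1 c2 c3 y with hf
    have hppK : ContinuousOn (stmt5pp c1 c2 c3) (Metric.closedBall 0 a \ Metric.ball 0 b) := by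
      intro y hy
      have hyb : b ≤ ‖y‖ := by
        simp only [Set.mem_diff, Metric.mem_closedBall, Metric.mem_ball,
          dist_zero_right, not_lt] at hy
        exact hy.2
      exact ((stmt5_contDiffAt_pp (hqK y hyb)).continuousAt).continuousWithinAt
    have hppU : ContDiffOn ℝ 2 (stmt5pp c1 c2 c3) {x : E2 | b < ‖x‖ ∧ ‖x‖ < a} :=
      fun y hy => ((stmt5_contDiffAt_pp (hU y hy)).contDiffWithinAt)
    have hfle : ∀ y : E2, b ≤ ‖y‖ → ‖y‖ ≤ a → f y ≤ 0 := by
      apply stmt5_annulus_max_principle hb hba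
      · exact hvc.add hppK
      · exact hvreg.add hppU
      · intro z hzb hza
        have hz : z ∈ {x : E2 | b < ‖x‖ ∧ ‖x‖ < a} := ⟨hzb, hza⟩
        have h0 := stmt5_fderiv2_add hUopen hz hvreg hppU (EuclideanSpace.single 0 1)
        have h1 := stmt5_fderiv2_add hUopen hz hvreg hppU (EuclideanSpace.single 1 1)
        have hlap := stmt5_lap_pp (c1 := c1) (c2 := c2) (c3 := c3) (hU z hz)
        have hv0 := hharm z hzb hza
        show (0:ℝ) < _
        rw [hf]
        calc (0:ℝ) < 4 * ε := by linarith
        _ = _ := by rw [h0, h1]; linarith [hlap, hv0]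
      · intro z hz
        rcases hz with hz | hz
        · have hq : stmt5qq z = a ^ 2 := by rw [stmt5qq_eq_norm_sq, hz]
          have : v z = ca := hbda z hz
          simp only [hf, stmt5pp, hq, this, hc1, hc2, hc3]
          rw [Real.log_pow]
          push_cast
          nlinarith [hA]
        · have hq : stmt5qq z = b ^ 2 := by rw [stmt5qq_eq_norm_sq, hz]
          have : v z = cb := hbdb z hz
          simp only [hf, stmt5pp, hq, this, hc1, hc2, hc3]
          rw [Real.log_pow]
          push_cast
          nlinarith [hB, mul_nonneg hε.le (sub_nonneg.2 (le_of_lt (by nlinarith : b ^ 2 < a ^ 2)))]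
    have hx0 := hfle x (le_of_lt hxb) (le_of_lt hxa)
    have hqx : stmt5qq x = ‖x‖ ^ 2 := stmt5qq_eq_norm_sq x
    have hlogx : Real.log (‖x‖ ^ 2) = 2 * Real.log ‖x‖ := by
      rw [Real.log_pow]; push_cast; ring
    simp only [hf, stmt5pp, hqx, hlogx, hc1, hc2, hc3] at hx0
    nlinarith [mul_nonneg hε.le (sq_nonneg ‖x‖)]
  by_contra hcon
  push_neg at hcon
  set d := v x - (A * Real.log ‖x‖ + B) with hd
  have hdpos : 0 < d := by linarith
  have hk := key (d / (2 * a ^ 2)) (by positivity)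
  have h2 : d / (2 * a ^ 2) * a ^ 2 = d / 2 := by
    field_simp
  rw [h2] at hk
  linarith

end Stmt5Aux


/-- A function continuous on the closed annulus `b ≤ |x| ≤ a`, harmonic in the open annulus,
with constant boundary values `c_a` on `|x| = a` and `c_b` on `|x| = b`, is the explicit
logarithmic interpolation. -/
theorem stmt_5 (a b ca cb : ℝ) (hb : 0 < b) (hba : b < a)
    (v : EuclideanSpace ℝ (Fin 2) → ℝ)
    (hvc : ContinuousOn v (Metric.closedBall 0 a \ Metric.ball 0 b))
    (hvreg : ContDiffOn ℝ 2 v {x | b < ‖x‖ ∧ ‖x‖ < a})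
    (hharm : ∀ x, b < ‖x‖ → ‖x‖ < a →
      fderiv ℝ (fun y => fderiv ℝ v y (EuclideanSpace.single 0 1)) x (EuclideanSpace.single 0 1)
        + fderiv ℝ (fun y => fderiv ℝ v y (EuclideanSpace.single 1 1)) x
            (EuclideanSpace.single 1 1) = 0)
    (hbda : ∀ x : EuclideanSpace ℝ (Fin 2), ‖x‖ = a → v x = ca)
    (hbdb : ∀ x : EuclideanSpace ℝ (Fin 2), ‖x‖ = b → v x = cb) :
    ∀ x : EuclideanSpace ℝ (Fin 2), b < ‖x‖ → ‖x‖ < a →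
      v x = (ca - cb) / Real.log (a / b) * Real.log ‖x‖
        + (cb * Real.log a - ca * Real.log b) / Real.log (a / b) := by
  intro x hxb hxa
  have ha : 0 < a := lt_trans hb hba
  set L := Real.log (a / b) with hLdef
  have hLab : L = Real.log a - Real.log b := Real.log_div (ne_of_gt ha) (ne_of_gt hb)
  have hL : 0 < L := Real.log_pos ((one_lt_div hb).2 hba)
  set A := (ca - cb) / L with hAdef
  set B := (cb * Real.log a - ca * Real.log b) / L with hBdef
  have hA : A * Real.log a + B = ca := by
    rw [hAdef, hBdef]
    field_simp
    rw [hLab]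
    ring
  have hB : A * Real.log b + B = cb := by
    rw [hAdef, hBdef]
    field_simp
    rw [hLab]
    ring
  have hupper := stmt5_key a b ca cb A B hb hba v hvc hvreg hharm hbda hbdb hA hB x hxb hxa
  have hlower := stmt5_key a b (-ca) (-cb) (-A) (-B) hb hba (fun y => -v y) hvc.neg hvreg.neg
    (by
      intro z hz1 hz2
      rw [stmt5_fderiv2_neg, stmt5_fderiv2_neg]
      have := hharm z hz1 hz2
      linarith)
    (fun y hy => by show -v y = -ca; rw [hbda y hy]) (fun y hy => by show -v y = -cb; rw [hbdb y hy])
    (by linear_combination -hA) (by linear_combination -hB) x hxb hxa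
  linarith
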